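/- Assume every state of S has an edge to s_f and that r(s, s_f) = 0 for all s ∈ S. Let Q be a real-valued function on the edges of G with Q(s, s_f) = 0 for all s ∈ S, and define π(s'|s) = exp((Q(s, s') − V_Q(s))/α). Then for every edge s → s' with s' ∈ S, the Soft Q-Learning residual can be written purely in terms of the policy π: Q(s, s') − (r(s, s') + V_Q(s')) = α (log π(s'|s) − log π(s_f|s) + log π(s_f|s')) − r(s, s'). -/
import Mathlib


/-- The flow induced by a soft Q-function:
`F(s) = Σ_{s'' ∈ Ch(s)} exp(Q(s,s'')/α)`. -/
noncomputable def Fq {V : Type*} [Fintype V] (E : V → V → Prop) [DecidableRel E]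
    (α : ℝ) (Q : V → V → ℝ) (s : V) : ℝ :=
  ∑ t ∈ Finset.univ.filter (fun t => E s t), Real.exp (Q s t / α)

/-- The policy induced by a soft Q-function:
`P_F(s'|s) = exp(Q(s,s')/α) / F(s)`. -/
noncomputable def PFq {V : Type*} [Fintype V] (E : V → V → Prop) [DecidableRel E]
    (α : ℝ) (Q : V → V → ℝ) (s s' : V) : ℝ :=
  Real.exp (Q s s' / α) / Fq E α Q s

/-- The soft value function induced by a soft Q-function:
`V_Q(s) = α log Σ_{s'' ∈ Ch(s)} exp(Q(s,s'')/α)` for `s ∈ S`, and `V_Q(s_f) = 0`. -/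
noncomputable def VQ {V : Type*} [Fintype V] [DecidableEq V]
    (E : V → V → Prop) [DecidableRel E] (sf : V) (α : ℝ) (Q : V → V → ℝ) (s : V) : ℝ :=
  if s = sf then 0 else α * Real.log (Fq E α Q s)

/-- If every state of `S` has an edge to `s_f`, `r(s,s_f) = 0` and
`Q(s,s_f) = 0` for all `s ∈ S`, then for every edge `s → s'` with `s' ∈ S`, the SQL
residual can be written purely in terms of the policy
`π(s'|s) = exp((Q(s,s') - V_Q(s))/α)`:
`Q(s,s') - (r(s,s') + V_Q(s')) = α (log π(s'|s) - log π(s_f|s) + log π(s_f|s')) - r(s,s')`. -/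
theorem sql_residual_policy_parametrization
    {V : Type*} [Fintype V] [DecidableEq V]
    (E : V → V → Prop) [DecidableRel E] (s0 sf : V)
    (hacyc : ∀ v : V, ¬ Relation.TransGen E v v)
    (hsink : ∀ v : V, ¬ E sf v)
    (hreach : ∀ v : V, Relation.ReflTransGen E s0 v)
    (α : ℝ) (hα : 0 < α)
    -- every state of S has an edge to s_f, and the terminal reward vanishes
    (hterm : ∀ s : V, s ≠ sf → E s sf)
    (r : V → V → ℝ)
    (hrf : ∀ s : V, s ≠ sf → r s sf = 0)
    (Q : V → V → ℝ)
    (hQf : ∀ s : V, s ≠ sf → Q s sf = 0) :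
    ∀ s s' : V, E s s' → s' ≠ sf →
      Q s s' - (r s s' + VQ E sf α Q s')
        = α * (Real.log (Real.exp ((Q s s' - VQ E sf α Q s) / α))
            - Real.log (Real.exp ((Q s sf - VQ E sf α Q s) / α))
            + Real.log (Real.exp ((Q s' sf - VQ E sf α Q s') / α)))
          - r s s' := by
  intro s s' hE hs'
  have hs : s ≠ sf := fun h => hsink s' (h ▸ hE)
  rw [Real.log_exp, Real.log_exp, Real.log_exp, hQf s hs, hQf s' hs']
  field_simp
  ring
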